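/- For any string L of length n over a linearly ordered alphabet, the map φ(i) = occ_<(L, L[i]) + rank(L, i, L[i]) is a bijection from {1,...,n} to {1,...,n}, where occ_<(L,c) is the number of positions j with L[j] < c, and rank(L,i,c) is the number of positions j ≤ i with L[j] = c. -/

import Mathlib

/-- For a string `L` of length `n ≥ 1` over a linearly ordered alphabet,
the map `φ(i) = occ_<(L, L[i]) + rank(L, i, L[i])` is a bijection from `{1,...,n}`
(the index set, here `Fin n`) to `{1,...,n}`. -/
theorem lf_formula_bijective {α : Type*} [LinearOrder α] {n : ℕ} (hn : 1 ≤ n)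
    (L : Fin n → α) (φ : Fin n → ℕ)
    (hφ : ∀ i, φ i =
      (Finset.univ.filter (fun j => L j < L i)).card +
      (Finset.univ.filter (fun j => j ≤ i ∧ L j = L i)).card) :
    Set.BijOn φ Set.univ (Set.Icc 1 n) := by
  set e : Fin n → α ×ₗ Fin n := fun i => toLex (L i, i) with he
  have einj : Function.Injective e := by
    intro i j h
    exact congrArg (fun p => (ofLex p).2) h
  have key : ∀ i, φ i = (Finset.univ.filter (fun j => e j ≤ e i)).card := by
    intro i
    rw [hφ]
    have hset : (Finset.univ.filter (fun j => e j ≤ e i)) =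
        (Finset.univ.filter (fun j => L j < L i)) ∪
        (Finset.univ.filter (fun j => j ≤ i ∧ L j = L i)) := by
      ext j
      simp only [Finset.mem_filter, Finset.mem_union, Finset.mem_univ, true_and, he,
        Prod.Lex.le_iff]
      tauto
    rw [hset, Finset.card_union_of_disjoint]
    rw [Finset.disjoint_left]
    intro j hj hj'
    simp only [Finset.mem_filter, Finset.mem_univ, true_and] at hj hj'
    exact absurd hj'.2 (ne_of_lt hj)
  -- injectivity
  have inj : Function.Injective φ := by
    intro i k h
    rw [key, key] at h
    have main : ∀ i k : Fin n, e i ≤ e k →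
        (Finset.univ.filter (fun j => e j ≤ e i)).card =
        (Finset.univ.filter (fun j => e j ≤ e k)).card → i = k := by
      intro i k hle hcard
      have hsub : (Finset.univ.filter (fun j => e j ≤ e i)) ⊆
          (Finset.univ.filter (fun j => e j ≤ e k)) := by
        intro j hj
        simp only [Finset.mem_filter, Finset.mem_univ, true_and] at hj ⊢
        exact le_trans hj hle
      have heq := Finset.eq_of_subset_of_card_le hsub (le_of_eq hcard.symm)
      have hk : k ∈ (Finset.univ.filter (fun j => e j ≤ e i)) := by
        rw [heq]; simp
      simp only [Finset.mem_filter, Finset.mem_univ, true_and] at hk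
      exact einj (le_antisymm hle hk)
    rcases le_total (e i) (e k) with hle | hle
    · exact main i k hle h
    · exact (main k i hle h.symm).symm
  -- maps to
  have maps : ∀ i, φ i ∈ Finset.Icc 1 n := by
    intro i
    rw [Finset.mem_Icc, key]
    constructor
    · rw [Nat.one_le_iff_ne_zero, ← Nat.pos_iff_ne_zero, Finset.card_pos]
      exact ⟨i, by simp⟩
    · simpa using Finset.card_filter_le Finset.univ (fun j => e j ≤ e i)
  -- surjectivity
  have himg : Finset.image φ Finset.univ = Finset.Icc 1 n := by
    apply Finset.eq_of_subset_of_card_le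
    · intro m hm
      rw [Finset.mem_image] at hm
      obtain ⟨i, _, rfl⟩ := hm
      exact maps i
    · rw [Finset.card_image_of_injective _ inj, Finset.card_univ, Fintype.card_fin,
        Nat.card_Icc]
      omega
  refine ⟨fun i _ => ?_, fun i _ k _ h => inj h, fun m hm => ?_⟩
  · have := maps i
    rw [Finset.mem_Icc] at this
    exact this
  · have : m ∈ Finset.Icc 1 n := by
      rw [Finset.mem_Icc]; exact hm
    rw [← himg, Finset.mem_image] at this
    obtain ⟨i, _, hi⟩ := this
    exact ⟨i, trivial, hi⟩
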